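/- For every g ∈ G and h ∈ H, the composition h∘g⁻¹ belongs to H, with ‖h∘g⁻¹‖ ≤ ‖h‖ + ‖supp(g)‖; the map (g,h) ↦ h∘g⁻¹ is an action of G on H by group automorphisms of H; and this action G×H → H is continuous with respect to the metric d on G and the metric d_H on H. -/

import Mathlib

open scoped ENNReal

/-- The weight of a point `(i,j) ∈ ℕ × ℕ`: `2 · 3^{-(i+1)}`. -/
noncomputable def wt (p : ℕ × ℕ) : ℝ≥0∞ := 2 * ((3 : ℝ≥0∞) ^ (p.1 + 1))⁻¹

/-- `‖S‖ = Σ_{(i,j) ∈ S} 2 · 3^{-(i+1)} ∈ [0,∞]` for `S ⊆ ℕ × ℕ`. -/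
noncomputable def nrmS (S : Set (ℕ × ℕ)) : ℝ≥0∞ := ∑' p, S.indicator wt p

lemma nrmS_mono {S T : Set (ℕ × ℕ)} (h : S ⊆ T) : nrmS S ≤ nrmS T :=
  ENNReal.tsum_le_tsum fun p =>
    Set.indicator_le_indicator_of_subset h (fun _ => zero_le) p

lemma nrmS_union_le (S T : Set (ℕ × ℕ)) : nrmS (S ∪ T) ≤ nrmS S + nrmS T := by
  rw [nrmS, nrmS, nrmS, ← ENNReal.tsum_add]
  refine ENNReal.tsum_le_tsum fun p => ?_
  by_cases hS : p ∈ S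
  · refine le_trans ?_ (le_add_right le_rfl)
    rw [Set.indicator_of_mem (Set.mem_union_left _ hS), Set.indicator_of_mem hS]
  · by_cases hT : p ∈ T
    · refine le_trans ?_ (le_add_left le_rfl)
      rw [Set.indicator_of_mem (Set.mem_union_right _ hT), Set.indicator_of_mem hT]
    · rw [Set.indicator_of_notMem (fun hc => hc.elim hS hT)]
      exact zero_le

lemma nrmS_empty : nrmS ∅ = 0 := by simp [nrmS]

/-- The support of `z : ℕ × ℕ → ZMod 2`. -/
def suppZ (z : ℕ × ℕ → ZMod 2) : Set (ℕ × ℕ) := {p | z p = 1}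

/-- `‖z‖` for `z : ℕ × ℕ → ZMod 2`. -/
noncomputable def nrmZ (z : ℕ × ℕ → ZMod 2) : ℝ≥0∞ := nrmS (suppZ z)

/-- `H = {z : ℕ × ℕ → ZMod 2 | ‖z‖ < ∞}`, as an (additive) subgroup of the product group
`ℕ × ℕ → ZMod 2` with pointwise addition mod 2. -/
noncomputable def Hgrp : AddSubgroup ((ℕ × ℕ) → ZMod 2) where
  carrier := {z | nrmZ z < ⊤}
  zero_mem' := by
    have h : suppZ 0 = ∅ := by ext p; simp [suppZ]
    simp [nrmZ, h, nrmS_empty]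
  add_mem' {z w} hz hw := by
    have hsub : suppZ (z + w) ⊆ suppZ z ∪ suppZ w := by
      intro p hp
      by_contra hc
      simp only [Set.mem_union, suppZ, Set.mem_setOf_eq, not_or] at hc
      have hdi : ∀ x : ZMod 2, x = 0 ∨ x = 1 := by decide
      have hz0 : z p = 0 := (hdi (z p)).resolve_right hc.1
      have hw0 : w p = 0 := (hdi (w p)).resolve_right hc.2
      have hp' : (z + w) p = 1 := hp
      rw [Pi.add_apply, hz0, hw0] at hp'
      exact absurd hp' (by decide)
    calc nrmZ (z + w) ≤ nrmS (suppZ z ∪ suppZ w) := nrmS_mono hsub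
      _ ≤ nrmZ z + nrmZ w := nrmS_union_le _ _
      _ < ⊤ := ENNReal.add_lt_top.2 ⟨hz, hw⟩
  neg_mem' {z} hz := by
    have h : suppZ (-z) = suppZ z := by
      ext p; simp [suppZ, CharTwo.neg_eq]
    simpa [nrmZ, h] using hz
/-- `φ(x) = Σ_i 2 · x i · 3^{-(i+1)}`, the standard map from `2^ℕ` onto the ternary Cantor
set (values of `x` read as `0, 1` in `ℝ`). -/
noncomputable def phiC (x : ℕ → ZMod 2) : ℝ :=
  ∑' i, 2 * ((x i).val : ℝ) * ((3 : ℝ) ^ (i + 1))⁻¹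

/-- The metric on `H`: `d_H(z,w) = Σ_j |φ(z(·,j)) − φ(w(·,j))|`, the `ℓ¹`-distance between
the corresponding points of `C^ℕ ∩ ℓ¹`. -/
noncomputable def dH (z w : ↥Hgrp) : ℝ :=
  ∑' j, |phiC (fun i => (z : (ℕ × ℕ) → ZMod 2) (i, j)) -
          phiC (fun i => (w : (ℕ × ℕ) → ZMod 2) (i, j))|

/-- The support of a permutation `g` of `ℕ × ℕ`. -/
def suppP (g : Equiv.Perm (ℕ × ℕ)) : Set (ℕ × ℕ) := {p | g p ≠ p}

lemma suppP_inv (g : Equiv.Perm (ℕ × ℕ)) : suppP g⁻¹ = suppP g := by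
  ext p
  simp only [suppP, Set.mem_setOf_eq, ne_eq]
  constructor
  · intro h hc
    exact h (by conv_lhs => rw [← hc]; rw [Equiv.Perm.inv_def, Equiv.symm_apply_apply] ; )
  · intro h hc
    exact h (by conv_lhs => rw [← hc]; rw [Equiv.Perm.inv_def, Equiv.apply_symm_apply])

/-- `G = {g ∈ Sym(ℕ × ℕ) | ‖supp g‖ < ∞}`, as a subgroup of the symmetric group of
`ℕ × ℕ`. -/
noncomputable def Ggrp : Subgroup (Equiv.Perm (ℕ × ℕ)) where
  carrier := {g | nrmS (suppP g) < ⊤}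
  one_mem' := by
    have h : suppP 1 = ∅ := by ext p; simp [suppP]
    simp [h, nrmS_empty]
  mul_mem' {f g} hf hg := by
    have hsub : suppP (f * g) ⊆ suppP f ∪ suppP g := by
      intro p hp
      by_contra hc
      simp only [Set.mem_union, suppP, Set.mem_setOf_eq, ne_eq, not_or, not_not] at hc
      exact hp (by simp only [suppP, Set.mem_setOf_eq, Equiv.Perm.mul_apply, hc.2, hc.1] at *)
    calc nrmS (suppP (f * g)) ≤ nrmS (suppP f ∪ suppP g) := nrmS_mono hsub
      _ ≤ nrmS (suppP f) + nrmS (suppP g) := nrmS_union_le _ _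
      _ < ⊤ := ENNReal.add_lt_top.2 ⟨hf, hg⟩
  inv_mem' {g} hg := by simpa [suppP_inv] using hg

/-- The metric on `G`: `d(f,g) = ‖supp (f⁻¹ ∘ g)‖`. -/
noncomputable def dG (f g : ↥Ggrp) : ℝ :=
  (nrmS (suppP ((f : Equiv.Perm (ℕ × ℕ))⁻¹ * (g : Equiv.Perm (ℕ × ℕ))))).toReal

/-- The action of `G` on `H`: `g • h = h ∘ g⁻¹`. -/
noncomputable def actGH (g : ↥Ggrp) (h : ↥Hgrp) : ↥Hgrp :=
  ⟨fun p => (h : (ℕ × ℕ) → ZMod 2) (((g : Equiv.Perm (ℕ × ℕ)))⁻¹ p), by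
    have hsub : suppZ (fun p => (h : (ℕ × ℕ) → ZMod 2) (((g : Equiv.Perm (ℕ × ℕ)))⁻¹ p)) ⊆
        suppZ (h : (ℕ × ℕ) → ZMod 2) ∪ suppP (g : Equiv.Perm (ℕ × ℕ)) := by
      intro p hp
      by_cases hgp : ((g : Equiv.Perm (ℕ × ℕ)))⁻¹ p = p
      · left
        have : (h : (ℕ × ℕ) → ZMod 2) (((g : Equiv.Perm (ℕ × ℕ)))⁻¹ p) = 1 := hp
        rwa [hgp] at this
      · right
        have : p ∈ suppP ((g : Equiv.Perm (ℕ × ℕ)))⁻¹ := hgp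
        rwa [suppP_inv] at this
    show nrmZ _ < ⊤
    calc nrmZ _ ≤ nrmS (suppZ (h : (ℕ × ℕ) → ZMod 2) ∪ suppP (g : Equiv.Perm (ℕ × ℕ))) :=
          nrmS_mono hsub
      _ ≤ nrmZ (h : (ℕ × ℕ) → ZMod 2) + nrmS (suppP (g : Equiv.Perm (ℕ × ℕ))) :=
          nrmS_union_le _ _
      _ < ⊤ := ENNReal.add_lt_top.2 ⟨h.2, g.2⟩⟩

/- ## Auxiliary set-level lemmas -/

lemma nrmS_tsum_subtype (S : Set (ℕ × ℕ)) : nrmS S = ∑' p : S, wt p :=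
  (tsum_subtype S wt).symm

lemma nrmS_image (g : Equiv.Perm (ℕ × ℕ)) (S : Set (ℕ × ℕ)) :
    nrmS (⇑g '' S) = ∑' p : S, wt (g p) := by
  rw [nrmS_tsum_subtype]
  exact ((Equiv.Set.image ⇑g S g.injective).tsum_eq (fun q => wt (q : ℕ × ℕ))).symm

lemma wt_le_nrmS {S : Set (ℕ × ℕ)} {p : ℕ × ℕ} (hp : p ∈ S) : wt p ≤ nrmS S := by
  have := ENNReal.le_tsum (f := S.indicator wt) p
  rwa [Set.indicator_of_mem hp] at this

lemma mem_suppP_apply {g : Equiv.Perm (ℕ × ℕ)} {p : ℕ × ℕ} (hp : p ∈ suppP g) :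
    g p ∈ suppP g := by
  simp only [suppP, Set.mem_setOf_eq, ne_eq] at *
  intro hc
  exact hp (g.injective hc)

lemma mem_suppP_inv_apply {g : Equiv.Perm (ℕ × ℕ)} {p : ℕ × ℕ} (hp : p ∈ suppP g) :
    g⁻¹ p ∈ suppP g := by
  simp only [suppP, Set.mem_setOf_eq, ne_eq] at *
  intro hc
  apply hp
  have h2 : p = g⁻¹ p := by
    conv_lhs => rw [← g.apply_symm_apply p]
    exact hc
  conv_lhs => rw [h2]
  rw [Equiv.Perm.inv_def, Equiv.apply_symm_apply]

lemma image_suppP (g : Equiv.Perm (ℕ × ℕ)) : ⇑g '' suppP g = suppP g := by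
  apply Set.Subset.antisymm
  · rintro q ⟨p, hp, rfl⟩; exact mem_suppP_apply hp
  · intro p hp
    exact ⟨g⁻¹ p, mem_suppP_inv_apply hp, g.apply_symm_apply p⟩

/-- Contribution of the deep-row part of the support of `g` to the norm of the image. -/
noncomputable def tailB (g : Equiv.Perm (ℕ × ℕ)) (M : ℕ) : ℝ≥0∞ :=
  ∑' p, ((suppP g) ∩ {q | M ≤ q.1}).indicator (fun q => wt (g q)) p

lemma tsum_supp_indicator_eq (g : Equiv.Perm (ℕ × ℕ)) :
    ∑' p, (suppP g).indicator (fun q => wt (g q)) p = nrmS (suppP g) := by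
  rw [← tsum_subtype (suppP g) (fun q => wt (g q)), ← nrmS_image, image_suppP]

lemma tailB_small (g : Equiv.Perm (ℕ × ℕ)) (hg : nrmS (suppP g) ≠ ⊤) {ε : ℝ≥0∞}
    (hε : 0 < ε) : ∃ M : ℕ, tailB g M < ε := by
  set f : ℕ × ℕ → ℝ≥0∞ := (suppP g).indicator (fun q => wt (g q)) with hf
  have htot : ∑' p, f p ≠ ⊤ := by rw [hf, tsum_supp_indicator_eq]; exact hg
  rcases eq_or_ne ε ⊤ with rfl | hεt
  · refine ⟨0, lt_of_le_of_lt ?_ (lt_of_le_of_ne le_top htot)⟩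
    exact ENNReal.tsum_le_tsum fun p => Set.indicator_le_indicator_of_subset
      Set.inter_subset_left (fun _ => zero_le) p
  · have h2 : (0:ℝ≥0∞) < ε / 2 := ENNReal.div_pos hε.ne' (by norm_num)
    have := ENNReal.tendsto_tsum_compl_atTop_zero htot
    rw [ENNReal.tendsto_atTop_zero] at this
    obtain ⟨s, hs⟩ := this (ε / 2) h2
    have hs' := hs s le_rfl
    refine ⟨(s.sup fun p => p.1) + 1, lt_of_le_of_lt (le_trans ?_ hs')
      (ENNReal.half_lt_self hε.ne' hεt)⟩
    have heq : ∑' (b : { x // x ∉ s }), f ↑b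
        = ∑' p, Set.indicator {x : ℕ × ℕ | x ∉ s} f p := tsum_subtype _ f
    rw [heq, tailB]
    refine ENNReal.tsum_le_tsum fun p => ?_
    by_cases hp : p ∈ (suppP g) ∩ {q : ℕ × ℕ | (s.sup fun p => p.1) + 1 ≤ q.1}
    · have hns : p ∉ s := by
        intro hc
        have h3 : p.1 ≤ s.sup (fun p => p.1) := Finset.le_sup hc
        have h4 : (s.sup fun p => p.1) + 1 ≤ p.1 := hp.2
        omega
      rw [Set.indicator_of_mem hp, Set.indicator_of_mem (by exact hns), hf,
        Set.indicator_of_mem hp.1]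
    · rw [Set.indicator_of_notMem hp]
      exact zero_le
lemma nrmS_image_le (g : Equiv.Perm (ℕ × ℕ)) {W : Set (ℕ × ℕ)} {M : ℕ}
    (hW : ∀ p ∈ W, M ≤ p.1) : nrmS (⇑g '' W) ≤ nrmS W + tailB g M := by
  set ind : ℕ × ℕ → ℝ≥0∞ := ((suppP g) ∩ {q | M ≤ q.1}).indicator (fun q => wt (g q)) with hind
  rw [nrmS_image, nrmS_tsum_subtype, tailB]
  have key : ∀ p : W, wt (g ↑p) ≤ wt ↑p + ind ↑p := by
    rintro ⟨p, hp⟩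
    by_cases hgp : g p = p
    · simp only [hgp]
      exact le_add_right le_rfl
    · have hmem : p ∈ (suppP g) ∩ {q : ℕ × ℕ | M ≤ q.1} := ⟨hgp, hW p hp⟩
      rw [hind, Set.indicator_of_mem hmem]
      exact le_add_left le_rfl
  calc ∑' p : W, wt (g ↑p) ≤ ∑' p : W, (wt ↑p + ind ↑p) := ENNReal.tsum_le_tsum key
    _ = (∑' p : W, wt ↑p) + ∑' p : W, ind ↑p := ENNReal.tsum_add
    _ ≤ (∑' p : W, wt ↑p) + ∑' p, ind p := by
        exact add_le_add_right (ENNReal.tsum_comp_le_tsum_of_injective Subtype.val_injective ind) _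

lemma deep_of_small {W : Set (ℕ × ℕ)} {M : ℕ} (h : nrmS W < wt (M, 0)) :
    ∀ p ∈ W, M ≤ p.1 := by
  intro p hp
  have h1 : wt p < wt (M, 0) := lt_of_le_of_lt (wt_le_nrmS hp) h
  by_contra hc
  push_neg at hc
  apply absurd h1 (not_lt.2 ?_)
  show (2 : ℝ≥0∞) * ((3 : ℝ≥0∞) ^ (M + 1))⁻¹ ≤ 2 * ((3 : ℝ≥0∞) ^ (p.1 + 1))⁻¹
  have hpow : (3 : ℝ≥0∞) ^ (p.1 + 1) ≤ (3 : ℝ≥0∞) ^ (M + 1) :=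
    pow_le_pow_right₀ (by norm_num) (by omega)
  exact mul_le_mul_right (ENNReal.inv_le_inv.2 hpow) 2
/- ## Column-level analysis -/

noncomputable def rwt (i : ℕ) : ℝ := 2 * ((3:ℝ) ^ (i+1))⁻¹
noncomputable def cwt (i : ℕ) : ℝ≥0∞ := 2 * ((3:ℝ≥0∞) ^ (i+1))⁻¹

lemma rwt_nonneg (i : ℕ) : 0 ≤ rwt i := by
  rw [rwt]; positivity

lemma rwt_eq (i : ℕ) : rwt i = (2/3) * (1/3:ℝ)^i := by
  rw [rwt, pow_succ, mul_inv, one_div, inv_pow]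
  ring

lemma summable_rwt : Summable rwt := by
  have h := (summable_geometric_of_lt_one (by norm_num : (0:ℝ) ≤ 1/3)
    (by norm_num : (1/3:ℝ) < 1)).mul_left (2/3)
  exact h.congr (fun i => (rwt_eq i).symm)

lemma tsum_rwt_add (k : ℕ) : ∑' i, rwt (i + k) = ((3:ℝ)^k)⁻¹ := by
  have h1 : ∀ i : ℕ, rwt (i + k) = (2/3 * (1/3:ℝ)^k) * (1/3:ℝ)^i := by
    intro i
    rw [rwt_eq, pow_add]
    ring
  rw [tsum_congr h1, tsum_mul_left, tsum_geometric_of_lt_one (by norm_num) (by norm_num)]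
  rw [one_div, inv_pow]
  rw [show (1 - (3:ℝ)⁻¹)⁻¹ = 3/2 by norm_num]
  field_simp

lemma cwt_eq (i : ℕ) : cwt i = ENNReal.ofReal (rwt i) := by
  rw [cwt, rwt, ENNReal.ofReal_mul (by norm_num),
    ENNReal.ofReal_inv_of_pos (by positivity), ENNReal.ofReal_pow (by norm_num)]
  norm_num

lemma wt_eq_cwt (p : ℕ × ℕ) : wt p = cwt p.1 := rfl

noncomputable def pterm (x : ℕ → ZMod 2) (i : ℕ) : ℝ := 2 * ((x i).val : ℝ) * ((3:ℝ)^(i+1))⁻¹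

lemma phiC_eq (x : ℕ → ZMod 2) : phiC x = ∑' i, pterm x i := rfl

lemma pterm_nonneg (x : ℕ → ZMod 2) (i : ℕ) : 0 ≤ pterm x i := by
  rw [pterm]; positivity

lemma pterm_le_rwt (x : ℕ → ZMod 2) (i : ℕ) : pterm x i ≤ rwt i := by
  rw [pterm, rwt]
  have hv : ((x i).val : ℝ) ≤ 1 := by
    have := (x i).val_lt
    have : (x i).val ≤ 1 := by omega
    exact_mod_cast this
  have hw : (0:ℝ) ≤ ((3:ℝ)^(i+1))⁻¹ := by positivity
  nlinarith

lemma summable_pterm (x : ℕ → ZMod 2) : Summable (pterm x) :=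
  Summable.of_nonneg_of_le (pterm_nonneg x) (pterm_le_rwt x) summable_rwt

lemma abs_pterm_sub (x y : ℕ → ZMod 2) (i : ℕ) :
    |pterm x i - pterm y i| = Set.indicator {i' | x i' ≠ y i'} rwt i := by
  have hw : (0:ℝ) ≤ ((3:ℝ)^(i+1))⁻¹ := by positivity
  have hcases : ∀ a : ZMod 2, a = 0 ∨ a = 1 := by decide
  by_cases hxy : x i = y i
  · rw [Set.indicator_of_notMem (by simpa using hxy)]
    rw [pterm, pterm, hxy, sub_self, abs_zero]
  · rw [Set.indicator_of_mem (by simpa using hxy), pterm, pterm, rwt]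
    rcases hcases (x i) with hx | hx <;> rcases hcases (y i) with hy | hy
    · exact absurd (hx.trans hy.symm) hxy
    · simp only [hx, hy, ZMod.val_zero, ZMod.val_one, Nat.cast_zero, Nat.cast_one,
        mul_zero, zero_mul, mul_one, zero_sub, abs_neg]
      rw [abs_of_nonneg (by positivity)]
    · simp only [hx, hy, ZMod.val_zero, ZMod.val_one, Nat.cast_zero, Nat.cast_one,
        mul_zero, zero_mul, mul_one, sub_zero]
      rw [abs_of_nonneg (by positivity)]
    · exact absurd (hx.trans hy.symm) hxy
noncomputable def colE (x y : ℕ → ZMod 2) : ℝ≥0∞ :=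
  ∑' i, Set.indicator {i' | x i' ≠ y i'} cwt i

lemma summable_ind (x y : ℕ → ZMod 2) :
    Summable (Set.indicator {i' | x i' ≠ y i'} rwt) :=
  Summable.of_nonneg_of_le
    (fun i => Set.indicator_nonneg (fun j _ => rwt_nonneg j) i)
    (fun i => Set.indicator_le_self' (fun j _ => rwt_nonneg j) i) summable_rwt

lemma colE_eq (x y : ℕ → ZMod 2) :
    colE x y = ENNReal.ofReal (∑' i, Set.indicator {i' | x i' ≠ y i'} rwt i) := by
  rw [ENNReal.ofReal_tsum_of_nonneg (fun i => Set.indicator_nonneg (fun j _ => rwt_nonneg j) i)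
    (summable_ind x y), colE]
  refine tsum_congr fun i => ?_
  by_cases h : i ∈ {i' | x i' ≠ y i'}
  · rw [Set.indicator_of_mem h, Set.indicator_of_mem h, cwt_eq]
  · rw [Set.indicator_of_notMem h, Set.indicator_of_notMem h, ENNReal.ofReal_zero]

lemma colE_ne_top (x y : ℕ → ZMod 2) : colE x y ≠ ⊤ := by
  rw [colE_eq]; exact ENNReal.ofReal_ne_top

lemma phi_sub_eq (x y : ℕ → ZMod 2) :
    phiC x - phiC y = ∑' i, (pterm x i - pterm y i) := by
  rw [phiC_eq, phiC_eq, Summable.tsum_sub (summable_pterm x) (summable_pterm y)]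

lemma summable_ptermsub (x y : ℕ → ZMod 2) : Summable (fun i => pterm x i - pterm y i) :=
  (summable_pterm x).sub (summable_pterm y)

lemma colA_real (x y : ℕ → ZMod 2) :
    |phiC x - phiC y| ≤ ∑' i, Set.indicator {i' | x i' ≠ y i'} rwt i := by
  rw [phi_sub_eq]
  have h1 : |∑' i, (pterm x i - pterm y i)| ≤ ∑' i, |pterm x i - pterm y i| := by
    have hs : Summable fun i => ‖pterm x i - pterm y i‖ := by
      simp only [Real.norm_eq_abs]
      exact (summable_ind x y).congr (fun i => (abs_pterm_sub x y i).symm)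
    simpa only [Real.norm_eq_abs] using norm_tsum_le_tsum_norm hs
  exact h1.trans (le_of_eq (tsum_congr (abs_pterm_sub x y)))

lemma colB_real (x y : ℕ → ZMod 2) (hxy : ∃ i, x i ≠ y i) :
    ∑' i, Set.indicator {i' | x i' ≠ y i'} rwt i ≤ 3 * |phiC x - phiC y| := by
  classical
  set i₀ := Nat.find hxy with hi₀
  have hspec : x i₀ ≠ y i₀ := Nat.find_spec hxy
  have hmin : ∀ i < i₀, x i = y i := fun i hi => by
    by_contra hc; exact absurd (Nat.find_le hc : i₀ ≤ i) (by omega)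
  -- Step A : the sum is at most (3 ^ i₀)⁻¹
  have hsub : {i' | x i' ≠ y i'} ⊆ {i' | i₀ ≤ i'} := by
    intro i hi
    by_contra hc
    exact hi (hmin i (by simpa using hc))
  have hindle : ∀ i, Set.indicator {i' | x i' ≠ y i'} rwt i ≤
      Set.indicator {i' | i₀ ≤ i'} rwt i :=
    fun i => Set.indicator_le_indicator_of_subset hsub (fun j => rwt_nonneg j) i
  have hsum2 : Summable (Set.indicator {i' | i₀ ≤ i'} rwt) :=
    Summable.of_nonneg_of_le (fun i => Set.indicator_nonneg (fun j _ => rwt_nonneg j) i)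
      (fun i => Set.indicator_le_self' (fun j _ => rwt_nonneg j) i) summable_rwt
  have hA : ∑' i, Set.indicator {i' | x i' ≠ y i'} rwt i ≤ ((3:ℝ)^i₀)⁻¹ := by
    refine le_trans (Summable.tsum_le_tsum hindle (summable_ind x y) hsum2) ?_
    have hsplit := Summable.sum_add_tsum_nat_add i₀ hsum2
    have hzero : ∑ i ∈ Finset.range i₀, Set.indicator {i' | i₀ ≤ i'} rwt i = 0 := by
      refine Finset.sum_eq_zero fun i hi => ?_
      rw [Set.indicator_of_notMem]
      simp only [Set.mem_setOf_eq, not_le]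
      exact Finset.mem_range.1 hi
    have htail : ∀ i : ℕ, Set.indicator {i' | i₀ ≤ i'} rwt (i + i₀) = rwt (i + i₀) :=
      fun i => Set.indicator_of_mem (by simp) rwt
    rw [← hsplit, hzero, zero_add, tsum_congr htail, tsum_rwt_add]
  -- Step B : (3 ^ (i₀+1))⁻¹ ≤ |phiC x - phiC y|
  have hB : ((3:ℝ)^(i₀+1))⁻¹ ≤ |phiC x - phiC y| := by
    set t : ℕ → ℝ := fun i => pterm x i - pterm y i with ht
    have hts : Summable t := summable_ptermsub x y
    have hsplit := Summable.sum_add_tsum_nat_add (i₀ + 1) hts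
    have hhead : ∑ i ∈ Finset.range (i₀ + 1), t i = t i₀ := by
      refine Finset.sum_eq_single_of_mem i₀ (Finset.self_mem_range_succ i₀) fun i hi hne => ?_
      have hilt : i < i₀ := by
        have := Finset.mem_range.1 hi; omega
      rw [ht]
      simp only [pterm, hmin i hilt, sub_self]
    have habs_t : |t i₀| = rwt i₀ := by
      rw [ht]
      simpa [Set.indicator_of_mem (show i₀ ∈ {i' | x i' ≠ y i'} from hspec)]
        using abs_pterm_sub x y i₀
    have htail_abs : |∑' i, t (i + (i₀ + 1))| ≤ ((3:ℝ)^(i₀+1))⁻¹ := by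
      have hsum3 : Summable fun i => t (i + (i₀ + 1)) :=
        (summable_nat_add_iff (i₀+1)).2 hts
      have hterm : ∀ i, ‖t (i + (i₀ + 1))‖ ≤ rwt (i + (i₀ + 1)) := by
        intro i
        rw [Real.norm_eq_abs, ht, abs_pterm_sub x y]
        exact Set.indicator_le_self' (fun j _ => rwt_nonneg j) _
      have hnsum : Summable fun i => ‖t (i + (i₀ + 1))‖ :=
        Summable.of_nonneg_of_le (fun i => norm_nonneg _) hterm
          ((summable_nat_add_iff (i₀+1)).2 summable_rwt)
      calc |∑' i, t (i + (i₀ + 1))| ≤ ∑' i, ‖t (i + (i₀ + 1))‖ := by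
            simpa only [Real.norm_eq_abs] using norm_tsum_le_tsum_norm hnsum
        _ ≤ ∑' i, rwt (i + (i₀ + 1)) := Summable.tsum_le_tsum hterm hnsum
            ((summable_nat_add_iff (i₀+1)).2 summable_rwt)
        _ = ((3:ℝ)^(i₀+1))⁻¹ := tsum_rwt_add (i₀ + 1)
    have hphi : phiC x - phiC y = t i₀ + ∑' i, t (i + (i₀ + 1)) := by
      rw [phi_sub_eq, ← hsplit, hhead]
    have habs2 : |t i₀| - |∑' i, t (i + (i₀ + 1))| ≤ |phiC x - phiC y| := by
      rw [hphi]
      have := abs_add_le (t i₀ + ∑' i, t (i + (i₀ + 1))) (-(∑' i, t (i + (i₀ + 1))))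
      simp only [add_neg_cancel_right, abs_neg] at this
      linarith
    have hrwt : rwt i₀ = 2 * ((3:ℝ)^(i₀+1))⁻¹ := rfl
    rw [habs_t, hrwt] at habs2
    linarith
  calc ∑' i, Set.indicator {i' | x i' ≠ y i'} rwt i ≤ ((3:ℝ)^i₀)⁻¹ := hA
    _ = 3 * ((3:ℝ)^(i₀+1))⁻¹ := by
        rw [pow_succ, mul_inv]
        field_simp
    _ ≤ 3 * |phiC x - phiC y| := by linarith [hB]

lemma colA' (x y : ℕ → ZMod 2) : |phiC x - phiC y| ≤ (colE x y).toReal := by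
  rw [colE_eq, ENNReal.toReal_ofReal (tsum_nonneg fun i =>
    Set.indicator_nonneg (fun j _ => rwt_nonneg j) i)]
  exact colA_real x y

lemma colB' (x y : ℕ → ZMod 2) : colE x y ≤ ENNReal.ofReal (3 * |phiC x - phiC y|) := by
  by_cases hxy : ∃ i, x i ≠ y i
  · rw [colE_eq]
    exact ENNReal.ofReal_le_ofReal (colB_real x y hxy)
  · push_neg at hxy
    have : {i' | x i' ≠ y i'} = (∅ : Set ℕ) := by
      ext i; simp [hxy i]
    rw [colE, this]
    simp
lemma zmod2_add_eq_one (a b : ZMod 2) : a + b = 1 ↔ a ≠ b := by revert a b; decide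

lemma nrmZ_cols (z w : (ℕ × ℕ) → ZMod 2) :
    nrmZ (z + w) = ∑' j, colE (fun i => z (i, j)) (fun i => w (i, j)) := by
  rw [nrmZ, nrmS, ENNReal.tsum_prod', ENNReal.tsum_comm]
  refine tsum_congr fun j => tsum_congr fun i => ?_
  have hmem : ((i, j) ∈ suppZ (z + w)) ↔ i ∈ {i' | z (i', j) ≠ w (i', j)} := by
    simp only [suppZ, Set.mem_setOf_eq, Pi.add_apply]
    exact zmod2_add_eq_one _ _
  by_cases h : i ∈ {i' | z (i', j) ≠ w (i', j)}
  · rw [Set.indicator_of_mem (hmem.2 h), Set.indicator_of_mem h, wt_eq_cwt]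
  · rw [Set.indicator_of_notMem (fun hc => h (hmem.1 hc)), Set.indicator_of_notMem h]

lemma nrmZ_add_ne_top (z w : ↥Hgrp) :
    nrmZ ((z : (ℕ × ℕ) → ZMod 2) + (w : (ℕ × ℕ) → ZMod 2)) ≠ ⊤ := by
  have h := (z + w).2
  rw [AddSubgroup.coe_add] at h
  exact (h : nrmZ _ < ⊤).ne

lemma dH_le_nrmZ (z w : ↥Hgrp) :
    dH z w ≤ (nrmZ ((z : (ℕ × ℕ) → ZMod 2) + (w : (ℕ × ℕ) → ZMod 2))).toReal := by
  set c : ℕ → ℝ≥0∞ := fun j =>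
    colE (fun i => (z : (ℕ × ℕ) → ZMod 2) (i, j)) (fun i => (w : (ℕ × ℕ) → ZMod 2) (i, j))
    with hc
  have htot : ∑' j, c j ≠ ⊤ := by rw [← nrmZ_cols]; exact nrmZ_add_ne_top z w
  have hc_ne : ∀ j, c j ≠ ⊤ := fun j => colE_ne_top _ _
  have hsumc : Summable fun j => (c j).toReal := ENNReal.summable_toReal htot
  have hle : ∀ j, |phiC (fun i => (z : (ℕ × ℕ) → ZMod 2) (i, j)) -
      phiC (fun i => (w : (ℕ × ℕ) → ZMod 2) (i, j))| ≤ (c j).toReal := fun j => colA' _ _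
  rw [dH]
  refine le_trans (Summable.tsum_le_tsum hle
    (Summable.of_nonneg_of_le (fun j => abs_nonneg _) hle hsumc) hsumc) ?_
  rw [nrmZ_cols, ENNReal.tsum_toReal_eq hc_ne]

lemma summable_dH_terms (z w : ↥Hgrp) :
    Summable fun j => |phiC (fun i => (z : (ℕ × ℕ) → ZMod 2) (i, j)) -
      phiC (fun i => (w : (ℕ × ℕ) → ZMod 2) (i, j))| := by
  set c : ℕ → ℝ≥0∞ := fun j =>
    colE (fun i => (z : (ℕ × ℕ) → ZMod 2) (i, j)) (fun i => (w : (ℕ × ℕ) → ZMod 2) (i, j))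
  have htot : ∑' j, c j ≠ ⊤ := by rw [← nrmZ_cols]; exact nrmZ_add_ne_top z w
  have hsumc : Summable fun j => (c j).toReal := ENNReal.summable_toReal htot
  exact Summable.of_nonneg_of_le (fun j => abs_nonneg _) (fun j => colA' _ _) hsumc

lemma nrmZ_le_dH (z w : ↥Hgrp) :
    nrmZ ((z : (ℕ × ℕ) → ZMod 2) + (w : (ℕ × ℕ) → ZMod 2)) ≤
      ENNReal.ofReal (3 * dH z w) := by
  rw [nrmZ_cols]
  have hs := summable_dH_terms z w
  calc ∑' j, colE (fun i => (z : (ℕ × ℕ) → ZMod 2) (i, j))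
        (fun i => (w : (ℕ × ℕ) → ZMod 2) (i, j))
      ≤ ∑' j, ENNReal.ofReal (3 * |phiC (fun i => (z : (ℕ × ℕ) → ZMod 2) (i, j)) -
          phiC (fun i => (w : (ℕ × ℕ) → ZMod 2) (i, j))|) :=
        ENNReal.tsum_le_tsum fun j => colB' _ _
    _ = ENNReal.ofReal (∑' j, 3 * |phiC (fun i => (z : (ℕ × ℕ) → ZMod 2) (i, j)) -
          phiC (fun i => (w : (ℕ × ℕ) → ZMod 2) (i, j))|) :=
        (ENNReal.ofReal_tsum_of_nonneg (fun j => by positivity) (hs.mul_left 3)).symm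
    _ = ENNReal.ofReal (3 * dH z w) := by rw [tsum_mul_left, dH]
lemma wt_ne_top (p : ℕ × ℕ) : wt p ≠ ⊤ := by
  rw [wt]
  refine ENNReal.mul_ne_top (by norm_num) ?_
  rw [ENNReal.inv_ne_top]
  positivity

lemma wt_ne_zero (p : ℕ × ℕ) : wt p ≠ 0 := by
  rw [wt]
  refine mul_ne_zero (by norm_num) ?_
  rw [ENNReal.inv_ne_zero]
  exact ENNReal.pow_ne_top (by norm_num)

lemma wt_toReal_pos (p : ℕ × ℕ) : 0 < (wt p).toReal :=
  ENNReal.toReal_pos (wt_ne_zero p) (wt_ne_top p)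

lemma suppZ_act_subset (g : ↥Ggrp) (h : ↥Hgrp) :
    suppZ (fun p => (h : (ℕ × ℕ) → ZMod 2) (((g : Equiv.Perm (ℕ × ℕ)))⁻¹ p)) ⊆
      suppZ (h : (ℕ × ℕ) → ZMod 2) ∪ suppP (g : Equiv.Perm (ℕ × ℕ)) := by
  intro p hp
  by_cases hgp : ((g : Equiv.Perm (ℕ × ℕ)))⁻¹ p = p
  · left
    have : (h : (ℕ × ℕ) → ZMod 2) (((g : Equiv.Perm (ℕ × ℕ)))⁻¹ p) = 1 := hp
    rwa [hgp] at this
  · right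
    have : p ∈ suppP ((g : Equiv.Perm (ℕ × ℕ)))⁻¹ := hgp
    rwa [suppP_inv] at this

/-- For every `g ∈ G` and `h ∈ H`, the composition `h ∘ g⁻¹` belongs to
`H`, with `‖h ∘ g⁻¹‖ ≤ ‖h‖ + ‖supp g‖`; the map `(g,h) ↦ h ∘ g⁻¹` is an action of `G` on `H`
by group automorphisms of `H`; and this action `G × H → H` is continuous with respect to the
metric `d` on `G` and the metric `d_H` on `H`. -/
theorem statement14 :
    -- `h ∘ g⁻¹ ∈ H`, with the norm bound
    (∀ (g : ↥Ggrp) (h : ↥Hgrp),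
      nrmZ (fun p => (h : (ℕ × ℕ) → ZMod 2) (((g : Equiv.Perm (ℕ × ℕ)))⁻¹ p)) < ⊤ ∧
      nrmZ (fun p => (h : (ℕ × ℕ) → ZMod 2) (((g : Equiv.Perm (ℕ × ℕ)))⁻¹ p)) ≤
        nrmZ (h : (ℕ × ℕ) → ZMod 2) + nrmS (suppP (g : Equiv.Perm (ℕ × ℕ)))) ∧
    -- `(g,h) ↦ h ∘ g⁻¹` is an action of `G` on `H` …
    (∀ h : ↥Hgrp, actGH 1 h = h) ∧
    (∀ (g₁ g₂ : ↥Ggrp) (h : ↥Hgrp), actGH (g₁ * g₂) h = actGH g₁ (actGH g₂ h)) ∧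
    -- … by group automorphisms of `H`
    (∀ (g : ↥Ggrp) (h₁ h₂ : ↥Hgrp), actGH g (h₁ + h₂) = actGH g h₁ + actGH g h₂) ∧
    (∀ g : ↥Ggrp, Function.Bijective (actGH g)) ∧
    -- the action is (jointly) continuous with respect to `d` and `d_H`
    (∀ (g : ↥Ggrp) (h : ↥Hgrp), ∀ ε : ℝ, 0 < ε → ∃ δ : ℝ, 0 < δ ∧
      ∀ (g₁ : ↥Ggrp) (h₁ : ↥Hgrp), dG g g₁ < δ → dH h h₁ < δ →
        dH (actGH g h) (actGH g₁ h₁) < ε) := by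
  have hbound : ∀ (g : ↥Ggrp) (h : ↥Hgrp),
      nrmZ (fun p => (h : (ℕ × ℕ) → ZMod 2) (((g : Equiv.Perm (ℕ × ℕ)))⁻¹ p)) ≤
        nrmZ (h : (ℕ × ℕ) → ZMod 2) + nrmS (suppP (g : Equiv.Perm (ℕ × ℕ))) := by
    intro g h
    calc nrmZ _ ≤ nrmS (suppZ (h : (ℕ × ℕ) → ZMod 2) ∪ suppP (g : Equiv.Perm (ℕ × ℕ))) :=
        nrmS_mono (suppZ_act_subset g h)
      _ ≤ _ := nrmS_union_le _ _
  have hone : ∀ h : ↥Hgrp, actGH 1 h = h := by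
    intro h
    refine Subtype.ext (funext fun p => ?_)
    show (h : (ℕ × ℕ) → ZMod 2) _ = (h : (ℕ × ℕ) → ZMod 2) p
    simp
  have hmul : ∀ (g₁ g₂ : ↥Ggrp) (h : ↥Hgrp), actGH (g₁ * g₂) h = actGH g₁ (actGH g₂ h) := by
    intro g₁ g₂ h
    refine Subtype.ext (funext fun p => ?_)
    show (h : (ℕ × ℕ) → ZMod 2) (((g₁ * g₂ : ↥Ggrp) : Equiv.Perm (ℕ × ℕ))⁻¹ p) =
      (h : (ℕ × ℕ) → ZMod 2)
        (((g₂ : Equiv.Perm (ℕ × ℕ)))⁻¹ (((g₁ : Equiv.Perm (ℕ × ℕ)))⁻¹ p))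
    rw [Subgroup.coe_mul, mul_inv_rev, Equiv.Perm.mul_apply]
  refine ⟨fun g h => ⟨lt_of_le_of_lt (hbound g h)
      (ENNReal.add_lt_top.2 ⟨h.2, g.2⟩), hbound g h⟩, hone, hmul, ?_, ?_, ?_⟩
  · -- additivity
    intro g h₁ h₂
    refine Subtype.ext (funext fun p => ?_)
    rfl
  · -- bijectivity
    intro g
    have hli : ∀ h, actGH g⁻¹ (actGH g h) = h := fun h => by
      rw [← hmul, inv_mul_cancel, hone]
    have hri : ∀ h, actGH g (actGH g⁻¹ h) = h := fun h => by
      rw [← hmul, mul_inv_cancel, hone]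
    exact Function.bijective_iff_has_inverse.2 ⟨actGH g⁻¹, hli, hri⟩
  · -- continuity
    intro g h ε hε
    have hgfin : nrmS (suppP (g : Equiv.Perm (ℕ × ℕ))) ≠ ⊤ := (g.2 : _ < ⊤).ne
    obtain ⟨M, hM⟩ := tailB_small (g : Equiv.Perm (ℕ × ℕ)) hgfin
      (show (0:ℝ≥0∞) < ENNReal.ofReal (ε/8) from ENNReal.ofReal_pos.2 (by linarith))
    set δ : ℝ := min (ε/8) ((wt (M, 0)).toReal / 8) with hδ
    have hδpos : 0 < δ := lt_min (by linarith) (by linarith [wt_toReal_pos (M, 0)])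
    refine ⟨δ, hδpos, fun g₁ h₁ hdG hdH => ?_⟩
    -- the perturbation k
    set k : ↥Ggrp := g⁻¹ * g₁ with hk
    have hkco : (k : Equiv.Perm (ℕ × ℕ)) =
        ((g : Equiv.Perm (ℕ × ℕ)))⁻¹ * (g₁ : Equiv.Perm (ℕ × ℕ)) := by
      rw [hk, Subgroup.coe_mul, InvMemClass.coe_inv]
    have hkfin : nrmS (suppP (k : Equiv.Perm (ℕ × ℕ))) ≠ ⊤ := (k.2 : _ < ⊤).ne
    have hknorm : nrmS (suppP (k : Equiv.Perm (ℕ × ℕ))) < ENNReal.ofReal δ := by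
      rw [ENNReal.lt_ofReal_iff_toReal_lt hkfin]
      rw [dG] at hdG
      rw [hkco]
      exact hdG
    -- the difference of h's
    have hZ : nrmS (suppZ ((h : (ℕ × ℕ) → ZMod 2) + (h₁ : (ℕ × ℕ) → ZMod 2))) ≤
        ENNReal.ofReal (3 * δ) := by
      refine le_trans (nrmZ_le_dH h h₁) (ENNReal.ofReal_le_ofReal ?_)
      nlinarith [hdH]
    set W : Set (ℕ × ℕ) := suppZ ((h : (ℕ × ℕ) → ZMod 2) + (h₁ : (ℕ × ℕ) → ZMod 2)) ∪
      suppP (k : Equiv.Perm (ℕ × ℕ)) with hW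
    have hWnorm : nrmS W ≤ ENNReal.ofReal (4 * δ) := by
      refine le_trans (nrmS_union_le _ _) ?_
      refine le_trans (add_le_add hZ hknorm.le) ?_
      rw [← ENNReal.ofReal_add (by linarith) (by linarith)]
      exact ENNReal.ofReal_le_ofReal (by linarith)
    have hWlt : nrmS W < wt (M, 0) := by
      refine lt_of_le_of_lt hWnorm ?_
      have h4δ : 4 * δ < (wt (M, 0)).toReal := by
        have := min_le_right (ε/8) ((wt (M, 0)).toReal / 8)
        have := wt_toReal_pos (M, 0)
        rw [hδ]
        linarith [min_le_right (ε/8) ((wt (M, 0)).toReal / 8)]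
      calc ENNReal.ofReal (4 * δ) < ENNReal.ofReal ((wt (M, 0)).toReal) :=
            (ENNReal.ofReal_lt_ofReal_iff (wt_toReal_pos (M, 0))).2 h4δ
        _ = wt (M, 0) := ENNReal.ofReal_toReal (wt_ne_top (M, 0))
    have hdeep : ∀ p ∈ W, M ≤ p.1 := deep_of_small hWlt
    -- inclusion of the support of the difference
    have hsub : suppZ ((actGH g h : (ℕ × ℕ) → ZMod 2) + (actGH g₁ h₁ : (ℕ × ℕ) → ZMod 2)) ⊆
        ⇑(g : Equiv.Perm (ℕ × ℕ)) '' W := by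
      intro p hp
      have hne : (actGH g h : (ℕ × ℕ) → ZMod 2) p ≠ (actGH g₁ h₁ : (ℕ × ℕ) → ZMod 2) p :=
        (zmod2_add_eq_one _ _).1 hp
      refine ⟨((g : Equiv.Perm (ℕ × ℕ)))⁻¹ p, ?_, (g : Equiv.Perm (ℕ × ℕ)).apply_symm_apply p⟩
      set q : ℕ × ℕ := ((g : Equiv.Perm (ℕ × ℕ)))⁻¹ p with hq
      have hA : (actGH g h : (ℕ × ℕ) → ZMod 2) p = (h : (ℕ × ℕ) → ZMod 2) q := rfl
      have hB : (actGH g₁ h₁ : (ℕ × ℕ) → ZMod 2) p =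
          (h₁ : (ℕ × ℕ) → ZMod 2) (((k : Equiv.Perm (ℕ × ℕ)))⁻¹ q) := by
        show (h₁ : (ℕ × ℕ) → ZMod 2) (((g₁ : Equiv.Perm (ℕ × ℕ)))⁻¹ p) = _
        have hg₁ : (g₁ : Equiv.Perm (ℕ × ℕ)) =
            (g : Equiv.Perm (ℕ × ℕ)) * (k : Equiv.Perm (ℕ × ℕ)) := by
          rw [hkco, ← mul_assoc, mul_inv_cancel, one_mul]
        rw [hg₁, mul_inv_rev, Equiv.Perm.mul_apply, hq]
      by_cases hq2 : ((k : Equiv.Perm (ℕ × ℕ)))⁻¹ q = q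
      · left
        show ((h : (ℕ × ℕ) → ZMod 2) + (h₁ : (ℕ × ℕ) → ZMod 2)) q = 1
        rw [Pi.add_apply, zmod2_add_eq_one]
        intro hc
        apply hne
        rw [hA, hB, hq2, hc]
      · right
        have : q ∈ suppP ((k : Equiv.Perm (ℕ × ℕ)))⁻¹ := hq2
        rwa [suppP_inv] at this
    -- conclusion
    have hfinal : nrmZ ((actGH g h : (ℕ × ℕ) → ZMod 2) +
        (actGH g₁ h₁ : (ℕ × ℕ) → ZMod 2)) ≤ ENNReal.ofReal (4 * δ + ε / 8) := by
      calc nrmZ _ ≤ nrmS (⇑(g : Equiv.Perm (ℕ × ℕ)) '' W) := nrmS_mono hsub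
        _ ≤ nrmS W + tailB (g : Equiv.Perm (ℕ × ℕ)) M :=
            nrmS_image_le (g : Equiv.Perm (ℕ × ℕ)) hdeep
        _ ≤ ENNReal.ofReal (4 * δ) + ENNReal.ofReal (ε / 8) := add_le_add hWnorm hM.le
        _ = ENNReal.ofReal (4 * δ + ε / 8) :=
            (ENNReal.ofReal_add (by linarith) (by linarith)).symm
    have hd : dH (actGH g h) (actGH g₁ h₁) ≤ 4 * δ + ε / 8 := by
      refine le_trans (dH_le_nrmZ (actGH g h) (actGH g₁ h₁)) ?_
      exact ENNReal.toReal_le_of_le_ofReal (by linarith) hfinal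
    have hδle : δ ≤ ε / 8 := min_le_left _ _
    linarith
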